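/- Let g₀(x) = (2/π)(1−3x²)/(1+x²)³. Then ∫_ℝ g₀(x)·x²·log|x| dx = −3. -/

import Mathlib

noncomputable def gzero (x : ℝ) : ℝ := (2 / Real.pi) * (1 - 3 * x^2) / (1 + x^2)^3

open Real MeasureTheory Set Filter

private lemma aux_two_div_pi : 2 / Real.pi ≤ 1 := by
  rw [div_le_one Real.pi_pos]
  linarith [Real.pi_gt_three]

private lemma aux_meas : Measurable (fun x : ℝ => gzero x * x^2 * Real.log |x|) := by
  unfold gzero
  measurability

/-- Integrability on `Ioc 0 1` via boundedness. -/
private lemma aux_int_Ioc : IntegrableOn (fun x : ℝ => gzero x * x^2 * Real.log |x|)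
    (Ioc 0 1) := by
  apply Measure.integrableOn_of_bounded (M := 2) measure_Ioc_lt_top.ne
    aux_meas.aestronglyMeasurable
  rw [ae_restrict_iff' measurableSet_Ioc]
  refine ae_of_all _ (fun x hx => ?_)
  obtain ⟨hx0, hx1⟩ := hx
  have habs : |x| = x := abs_of_pos hx0
  have hu : (1:ℝ) ≤ (1 + x^2)^3 := by
    nlinarith [sq_nonneg x, sq_nonneg (x^2), sq_nonneg (x^3)]
  have hupos : (0:ℝ) < (1 + x^2)^3 := by positivity
  -- bound on x^2 * |log x|
  have hlog : -Real.log x ≤ x⁻¹ - 1 := by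
    have := Real.log_le_sub_one_of_pos (inv_pos.2 hx0)
    rwa [Real.log_inv] at this
  have hlabs : |Real.log x| = -Real.log x := abs_of_nonpos (Real.log_nonpos hx0.le hx1)
  have hxlog : x^2 * |Real.log x| ≤ 1 := by
    rw [hlabs]
    have h1 : x^2 * (-Real.log x) ≤ x^2 * (x⁻¹ - 1) :=
      mul_le_mul_of_nonneg_left hlog (sq_nonneg x)
    have h2 : x^2 * (x⁻¹ - 1) = x - x^2 := by
      field_simp
    nlinarith [sq_nonneg x]
  -- bound on gzero
  have hg : |gzero x| ≤ 2 := by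
    unfold gzero
    rw [abs_div, abs_mul, abs_of_pos hupos,
      abs_of_pos (div_pos two_pos Real.pi_pos)]
    have h13 : |1 - 3 * x^2| ≤ 2 := by
      rw [abs_le]; constructor <;> nlinarith
    calc 2 / Real.pi * |1 - 3 * x^2| / (1 + x^2)^3
        ≤ 2 / Real.pi * |1 - 3 * x^2| := by
          apply div_le_self (by positivity) hu
      _ ≤ 1 * 2 := by
          exact mul_le_mul aux_two_div_pi h13 (abs_nonneg _) zero_le_one
      _ = 2 := by norm_num
  -- combine
  have : ‖gzero x * x^2 * Real.log |x|‖ = |gzero x| * (x^2 * |Real.log x|) := by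
    rw [Real.norm_eq_abs, habs, abs_mul, abs_mul, abs_pow, abs_of_pos hx0]
    ring
  rw [this]
  calc |gzero x| * (x^2 * |Real.log x|) ≤ 2 * 1 :=
        mul_le_mul hg hxlog (by positivity) (by norm_num)
    _ = 2 := by norm_num

/-- Integrability on `Ioi 1` via comparison with `x ^ (-3/2)`. -/
private lemma aux_int_Ioi : IntegrableOn (fun x : ℝ => gzero x * x^2 * Real.log |x|)
    (Ioi 1) := by
  have hbase : IntegrableOn (fun x : ℝ => 16 * x ^ (-3/2 : ℝ)) (Ioi 1) :=
    (integrableOn_Ioi_rpow_of_lt (by norm_num) one_pos).const_mul 16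
  apply hbase.mono' aux_meas.aestronglyMeasurable
  rw [ae_restrict_iff' measurableSet_Ioi]
  refine ae_of_all _ (fun x hx => ?_)
  have hx1 : (1:ℝ) < x := hx
  have hx0 : (0:ℝ) < x := by linarith
  have habs : |x| = x := abs_of_pos hx0
  have hlog0 : 0 ≤ Real.log x := Real.log_nonneg hx1.le
  have hlog : Real.log x ≤ 2 * x ^ ((1:ℝ)/2) := by
    have := Real.log_le_rpow_div hx0.le (by norm_num : (0:ℝ) < 1/2)
    calc Real.log x ≤ x ^ ((1:ℝ)/2) / (1/2) := this
      _ = 2 * x ^ ((1:ℝ)/2) := by ring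
  have hu : x^6 ≤ (1 + x^2)^3 := by nlinarith
  have hupos : (0:ℝ) < (1 + x^2)^3 := by positivity
  have hx6 : (0:ℝ) < x^6 := by positivity
  have hg : |gzero x| ≤ 8 / x^4 := by
    unfold gzero
    rw [abs_div, abs_mul, abs_of_pos hupos, abs_of_pos (div_pos two_pos Real.pi_pos)]
    have h13 : |1 - 3 * x^2| ≤ 4 * x^2 := by
      rw [abs_le]; constructor <;> nlinarith
    calc 2 / Real.pi * |1 - 3 * x^2| / (1 + x^2)^3
        ≤ 2 / Real.pi * |1 - 3 * x^2| / x^6 := by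
          apply div_le_div_of_nonneg_left (by positivity) hx6 hu
      _ ≤ 1 * (4 * x^2) / x^6 := by
          apply div_le_div_of_nonneg_right ?_ hx6.le
          exact mul_le_mul aux_two_div_pi h13 (abs_nonneg _) zero_le_one
      _ = 8 / x^4 / 2 := by field_simp; ring
      _ ≤ 8 / x^4 := by
          have : (0:ℝ) ≤ 8 / x^4 := by positivity
          linarith
  have hnorm : ‖gzero x * x^2 * Real.log |x|‖ = |gzero x| * x^2 * Real.log x := by
    rw [Real.norm_eq_abs, habs, abs_mul, abs_mul, abs_pow, abs_of_pos hx0,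
      abs_of_nonneg hlog0]
  rw [hnorm]
  have key : |gzero x| * x^2 * Real.log x ≤ (8 / x^4) * x^2 * (2 * x ^ ((1:ℝ)/2)) := by
    have h1 : |gzero x| * x^2 ≤ (8 / x^4) * x^2 :=
      mul_le_mul_of_nonneg_right hg (sq_nonneg x)
    have h2 : |gzero x| * x^2 * Real.log x ≤ (8 / x^4) * x^2 * Real.log x :=
      mul_le_mul_of_nonneg_right h1 hlog0
    have h3 : (8 / x^4) * x^2 * Real.log x ≤ (8 / x^4) * x^2 * (2 * x ^ ((1:ℝ)/2)) :=
      mul_le_mul_of_nonneg_left hlog (by positivity)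
    linarith
  have hval : (8 / x^4) * x^2 * (2 * x ^ ((1:ℝ)/2)) = 16 * x ^ (-3/2 : ℝ) := by
    have h4 : x ^ (-3/2 : ℝ) = x ^ ((1:ℝ)/2) / x ^ (2 : ℝ) := by
      rw [← Real.rpow_sub hx0]; norm_num
    have h5 : x ^ (2:ℝ) = x ^ (2:ℕ) := by
      rw [← Real.rpow_natCast x 2]; norm_num
    rw [h4, h5]
    field_simp
    ring
  linarith [key, hval.le]

private lemma aux_image : (fun x : ℝ => x⁻¹) '' Ioo 0 1 = Ioi 1 := by
  ext y
  constructor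
  · rintro ⟨x, ⟨hx0, hx1⟩, rfl⟩
    exact (one_lt_inv_iff₀.mpr ⟨hx0, hx1⟩ : (1:ℝ) < x⁻¹)
  · intro hy
    have hy1 : (1:ℝ) < y := hy
    have hy0 : (0:ℝ) < y := by linarith
    exact ⟨y⁻¹, ⟨inv_pos.2 hy0, inv_lt_one_of_one_lt₀ hy1⟩, inv_inv y⟩

private lemma aux_deriv_inv : ∀ x ∈ Ioo (0:ℝ) 1,
    HasDerivWithinAt (fun y : ℝ => y⁻¹) (-(x^2)⁻¹) (Ioo 0 1) x := fun x hx =>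
  (hasDerivAt_inv hx.1.ne').hasDerivWithinAt

private lemma aux_injOn : InjOn (fun y : ℝ => y⁻¹) (Ioo 0 1) :=
  fun _ _ _ _ h => inv_injective h

/-- Pointwise combination on (0,1). -/
private lemma aux_combine : ∀ x ∈ Ioo (0:ℝ) 1,
    (gzero x * x^2 * Real.log |x|) +
      |(-(x^2)⁻¹)| • (gzero x⁻¹ * (x⁻¹)^2 * Real.log |x⁻¹|) =
    2 / Real.pi * (3 * (Real.log x * ((1 - x^2)/(1 + x^2)^2))) := by
  intro x hx
  obtain ⟨hx0, hx1⟩ := hx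
  have hxne : x ≠ 0 := hx0.ne'
  have habs : |x| = x := abs_of_pos hx0
  have habsi : |x⁻¹| = x⁻¹ := abs_of_pos (inv_pos.2 hx0)
  have hune : (1 + x^2) ≠ 0 := by positivity
  have hune' : (1 + (x⁻¹)^2) ≠ 0 := by positivity
  have hpi : Real.pi ≠ 0 := Real.pi_ne_zero
  rw [smul_eq_mul, abs_neg, abs_inv, abs_pow, habs, habsi, Real.log_inv]
  unfold gzero
  field_simp
  ring

private lemma aux_FTC
    (hint : IntervalIntegrable (fun x => Real.log x * ((1 - x^2)/(1 + x^2)^2))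
      volume 0 1) :
    ∫ x in (0:ℝ)..1, Real.log x * ((1 - x^2)/(1 + x^2)^2) = -(Real.pi/4) := by
  set F : ℝ → ℝ := fun x => Real.log x * (x / (1 + x^2)) - Real.arctan x with hF
  have hF0 : F 0 = 0 := by simp [hF]
  have hF1 : F 1 = -(Real.pi/4) := by
    simp [hF, Real.log_one, Real.arctan_one]
  have hcont : ContinuousOn F (Icc 0 1) := by
    intro x hx
    rcases eq_or_ne x 0 with rfl | hne
    · -- continuity at 0 from the right
      rw [← continuousWithinAt_diff_self]
      have h1 : Tendsto (fun x : ℝ => Real.log x * x) (nhdsWithin 0 (Ioi 0)) (nhds 0) := by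
        simpa using tendsto_log_mul_rpow_nhdsGT_zero one_pos
      have h2 : Tendsto (fun x : ℝ => 1 + x^2) (nhdsWithin 0 (Ioi 0)) (nhds 1) := by
        have hc : ContinuousAt (fun x : ℝ => 1 + x^2) 0 := by fun_prop
        have := hc.tendsto
        norm_num at this
        exact this.mono_left nhdsWithin_le_nhds
      have h3 : Tendsto (fun x : ℝ => Real.arctan x) (nhdsWithin 0 (Ioi 0)) (nhds 0) := by
        have := Real.continuous_arctan.tendsto (0:ℝ)
        simpa using this.mono_left nhdsWithin_le_nhds
      have h4 : Tendsto F (nhdsWithin 0 (Ioi 0)) (nhds 0) := by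
        have h5 : Tendsto (fun x : ℝ => Real.log x * x / (1 + x^2))
            (nhdsWithin 0 (Ioi 0)) (nhds 0) := by
          simpa [Pi.div_def] using h1.div h2 one_ne_zero
        have h6 : F = fun x => Real.log x * x / (1 + x^2) - Real.arctan x := by
          funext y; rw [hF]; ring
        rw [h6]
        simpa using h5.sub h3
      have hsub : Icc (0:ℝ) 1 \ {0} ⊆ Ioi 0 := by
        rintro y ⟨⟨hy0, _⟩, hy⟩
        exact lt_of_le_of_ne hy0 (Ne.symm (by simpa using hy))
      unfold ContinuousWithinAt
      rw [hF0]
      exact h4.mono_left (nhdsWithin_mono _ hsub)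
    · apply ContinuousAt.continuousWithinAt
      have : ContinuousAt (fun x => Real.log x * (x / (1 + x^2))) x := by
        apply ContinuousAt.mul (Real.continuousAt_log hne)
        apply ContinuousAt.div continuousAt_id
        · exact (continuous_const.add (continuous_pow 2)).continuousAt
        · positivity
      exact this.sub Real.continuous_arctan.continuousAt
  have hderiv : ∀ x ∈ Ioo (0:ℝ) 1, HasDerivWithinAt F
      (Real.log x * ((1 - x^2)/(1 + x^2)^2)) (Ioi x) x := by
    intro x hx
    have hx0 : (0:ℝ) < x := hx.1
    have hune : (1 + x^2) ≠ 0 := by positivity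
    have hlog : HasDerivAt Real.log x⁻¹ x := Real.hasDerivAt_log hx0.ne'
    have hsq : HasDerivAt (fun y : ℝ => 1 + y^2) (2*x) x := by
      have := ((hasDerivAt_pow 2 x).const_add 1)
      simpa using this
    have hq : HasDerivAt (fun y : ℝ => y / (1 + y^2))
        ((1 * (1 + x^2) - x * (2*x)) / (1 + x^2)^2) x :=
      (hasDerivAt_id x).div hsq hune
    have hmain := (hlog.mul hq).sub (Real.hasDerivAt_arctan x)
    have heq : x⁻¹ * (x / (1 + x^2)) +
        Real.log x * ((1 * (1 + x^2) - x * (2*x)) / (1 + x^2)^2) - 1 / (1 + x^2)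
        = Real.log x * ((1 - x^2)/(1 + x^2)^2) := by
      field_simp
      ring
    rw [heq] at hmain
    exact hmain.hasDerivWithinAt
  have := intervalIntegral.integral_eq_sub_of_hasDeriv_right_of_le zero_le_one
    hcont hderiv hint
  rw [this, hF0, hF1, sub_zero]

theorem stmt_8 : (∫ x : ℝ, gzero x * x^2 * Real.log |x|) = -3 := by
  set f : ℝ → ℝ := fun x => gzero x * x^2 * Real.log |x| with hf
  have heven : ∀ x : ℝ, f |x| = f x := by
    intro x
    simp only [hf, gzero, abs_abs, sq_abs]
  have h1 : (∫ x : ℝ, f x) = 2 * ∫ x in Ioi (0:ℝ), f x := by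
    rw [← integral_comp_abs (f := f)]
    congr 1
    funext x
    rw [heven]
  -- split the half-line integral
  have hsplit : (∫ x in Ioi (0:ℝ), f x) =
      (∫ x in Ioc (0:ℝ) 1, f x) + ∫ x in Ioi (1:ℝ), f x := by
    rw [← Ioc_union_Ioi_eq_Ioi (zero_le_one : (0:ℝ) ≤ 1)]
    exact setIntegral_union (Ioc_disjoint_Ioi le_rfl) measurableSet_Ioi
      aux_int_Ioc aux_int_Ioi
  -- change of variables on Ioi 1
  have hcv : (∫ x in Ioi (1:ℝ), f x) =
      ∫ x in Ioo (0:ℝ) 1, |(-(x^2)⁻¹)| • f x⁻¹ := by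
    rw [← aux_image]
    exact integral_image_eq_integral_abs_deriv_smul measurableSet_Ioo
      aux_deriv_inv aux_injOn f
  have hint1 : IntegrableOn f (Ioo 0 1) := aux_int_Ioc.mono_set Ioo_subset_Ioc_self
  have hint2 : IntegrableOn (fun x => |(-(x^2)⁻¹)| • f x⁻¹) (Ioo 0 1) := by
    have := (integrableOn_image_iff_integrableOn_abs_deriv_smul measurableSet_Ioo
      aux_deriv_inv aux_injOn f).mp (by rw [aux_image]; exact aux_int_Ioi)
    exact this
  have hadd : (∫ x in Ioo (0:ℝ) 1, f x) + (∫ x in Ioo (0:ℝ) 1, |(-(x^2)⁻¹)| • f x⁻¹)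
      = ∫ x in Ioo (0:ℝ) 1, (f x + |(-(x^2)⁻¹)| • f x⁻¹) :=
    (integral_add hint1 hint2).symm
  have hcongr : (∫ x in Ioo (0:ℝ) 1, (f x + |(-(x^2)⁻¹)| • f x⁻¹))
      = ∫ x in Ioo (0:ℝ) 1,
          2 / Real.pi * (3 * (Real.log x * ((1 - x^2)/(1 + x^2)^2))) := by
    apply setIntegral_congr_fun measurableSet_Ioo
    intro x hx
    exact aux_combine x hx
  -- integrability of the model integrand
  have hmint : IntegrableOn (fun x => Real.log x * ((1 - x^2)/(1 + x^2)^2))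
      (Ioo (0:ℝ) 1) := by
    have hsum : IntegrableOn (fun x => f x + |(-(x^2)⁻¹)| • f x⁻¹) (Ioo (0:ℝ) 1) :=
      hint1.add hint2
    have hsum2 : IntegrableOn
        (fun x => 2 / Real.pi * (3 * (Real.log x * ((1 - x^2)/(1 + x^2)^2))))
        (Ioo (0:ℝ) 1) := by
      apply hsum.congr_fun _ measurableSet_Ioo
      intro x hx
      exact aux_combine x hx
    have h6 : IntegrableOn
        (fun x => Real.pi / 6 *
          (2 / Real.pi * (3 * (Real.log x * ((1 - x^2)/(1 + x^2)^2)))))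
        (Ioo (0:ℝ) 1) := hsum2.const_mul (Real.pi / 6)
    apply h6.congr_fun _ measurableSet_Ioo
    intro x _
    have hpi : Real.pi ≠ 0 := Real.pi_ne_zero
    field_simp
    ring
  have hmint' : IntervalIntegrable (fun x => Real.log x * ((1 - x^2)/(1 + x^2)^2))
      volume 0 1 := by
    rw [intervalIntegrable_iff_integrableOn_Ioc_of_le zero_le_one,
      integrableOn_Ioc_iff_integrableOn_Ioo]
    exact hmint
  have hval : (∫ x in Ioo (0:ℝ) 1, Real.log x * ((1 - x^2)/(1 + x^2)^2))
      = -(Real.pi/4) := by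
    rw [← integral_Ioc_eq_integral_Ioo, ← intervalIntegral.integral_of_le zero_le_one]
    exact aux_FTC hmint'
  have hfinal : (∫ x in Ioo (0:ℝ) 1,
      2 / Real.pi * (3 * (Real.log x * ((1 - x^2)/(1 + x^2)^2))))
      = 2 / Real.pi * (3 * -(Real.pi/4)) := by
    rw [integral_const_mul, integral_const_mul, hval]
  have hpi : Real.pi ≠ 0 := Real.pi_ne_zero
  rw [h1, hsplit, hcv, integral_Ioc_eq_integral_Ioo, hadd, hcongr, hfinal]
  field_simp
  ring
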